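/- Let p > 1 be a real number, let n be a positive integer, and let r be an integer with 0 ≤ r ≤ n. Then the sum of P^Sym_n(λ) over all partitions λ with exactly r parts equals ∏_{j=r+1}^{n} (1 - 1/p^j) / (p^{C(r+1,2)} · ∏_{j=1}^{⌊(n-r)/2⌋} (1 - 1/p^{2j})). -/

import Mathlib

open Finset

noncomputable section

/-- A partition: a multiset of positive natural numbers. -/
def Ptn : Type := {s : Multiset ℕ // ∀ x ∈ s, 0 < x}

namespace Ptn

/-- `|λ|`, the size of the partition. -/
def size (l : Ptn) : ℕ := l.1.sum
/-- `r(λ)`, the number of parts. -/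
def numParts (l : Ptn) : ℕ := l.1.card
/-- `m_i(λ)`, the number of parts of size `i`. -/
def mult (l : Ptn) (i : ℕ) : ℕ := l.1.count i
/-- `λ'_i`, the number of parts of size at least `i` (the `i`-th column length). -/
def col (l : Ptn) (i : ℕ) : ℕ := (l.1.filter (fun x => i ≤ x)).card
/-- `λ_1`, the largest part. -/
def maxPart (l : Ptn) : ℕ := l.1.sup
/-- `∑_i (λ'_i)^2` (over `i ≥ 1`; the terms vanish for `i > |λ|`). -/
def sumColSq (l : Ptn) : ℕ := ∑ i ∈ Finset.Icc 1 l.size, (l.col i) ^ 2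
/-- `n(λ) = ∑_i C(λ'_i, 2)` (over `i ≥ 1`; the terms vanish for `i > |λ|`). -/
def nStat (l : Ptn) : ℕ := ∑ i ∈ Finset.Icc 1 l.size, Nat.choose (l.col i) 2

end Ptn

/-- `(x)_i = (1-x)(1-x/p)⋯(1-x/p^{i-1})`. -/
def poch (p x : ℝ) (i : ℕ) : ℝ := ∏ k ∈ Finset.range i, (1 - x / p ^ k)

/-- `|Aut(λ)| = p^{∑ (λ'_i)^2} ∏_i (1/p)_{m_i(λ)}`. -/
def autCard (p : ℝ) (l : Ptn) : ℝ :=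
  p ^ l.sumColSq * ∏ i ∈ Finset.Icc 1 l.size, poch p (1 / p) (l.mult i)

/-- The measure `P_{d,u}` on partitions. -/
def Pdu (p u : ℝ) (d : ℕ) (l : Ptn) : ℝ :=
  if l.numParts ≤ d then
    u ^ l.size / autCard p l
      * ∏ i ∈ Finset.Icc 1 d, (1 - u / p ^ i)
      * ∏ i ∈ Finset.Icc (d - l.numParts + 1) d, (1 - 1 / p ^ i)
  else 0

/-- The measure `P^{Sym}_n` on partitions (here `⌈(n-r)/2⌉` is `(n-r+1)/2` in
natural division). -/
def PSym (p : ℝ) (n : ℕ) (l : Ptn) : ℝ :=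
  if l.numParts ≤ n then
    (∏ j ∈ Finset.Icc (n - l.numParts + 1) n, (1 - 1 / p ^ j)) *
      (∏ i ∈ Finset.Icc 1 ((n - l.numParts + 1) / 2), (1 - 1 / p ^ (2 * i - 1))) /
      (p ^ (l.nStat + l.size) *
        ∏ i ∈ Finset.Icc 1 l.size,
          ∏ j ∈ Finset.Icc 1 (l.mult i / 2), (1 - 1 / p ^ (2 * j)))
  else 0

namespace PS

def Dp (p : ℝ) (k : ℕ) : ℝ := ∏ j ∈ Finset.Icc 1 k, (1 - 1 / p ^ j)
def Ep (p : ℝ) (t : ℕ) : ℝ := ∏ j ∈ Finset.Icc 1 t, (1 - 1 / p ^ (2 * j))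
def Op (p : ℝ) (t : ℕ) : ℝ := ∏ i ∈ Finset.Icc 1 t, (1 - 1 / p ^ (2 * i - 1))

variable {p : ℝ}

lemma qp (p : ℝ) (k : ℕ) : (1/p)^k = 1/p^k := by rw [div_pow, one_pow]

lemma fac_pos (hp : 1 < p) {j : ℕ} (hj : 1 ≤ j) : 0 < 1 - 1 / p ^ j := by
  have h1 : (1:ℝ) < p ^ j := one_lt_pow₀ hp (by omega)
  have h0 : (0:ℝ) < p ^ j := by linarith
  have : 1 / p ^ j < 1 := by rw [div_lt_one h0]; exact h1
  linarith

lemma fac_le_one (hp : 1 < p) (j : ℕ) : 1 - 1 / p ^ j ≤ 1 := by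
  have h0 : (0:ℝ) < p ^ j := pow_pos (by linarith) j
  have : 0 < 1 / p ^ j := by positivity
  linarith

lemma Dp_pos (hp : 1 < p) (k : ℕ) : 0 < Dp p k :=
  Finset.prod_pos fun j hj => fac_pos hp (mem_Icc.mp hj).1

lemma Ep_pos (hp : 1 < p) (t : ℕ) : 0 < Ep p t :=
  Finset.prod_pos fun j hj => fac_pos hp (by have := (mem_Icc.mp hj).1; omega)

lemma Op_pos (hp : 1 < p) (t : ℕ) : 0 < Op p t :=
  Finset.prod_pos fun j hj => fac_pos hp (by have := (mem_Icc.mp hj).1; omega)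

lemma Dp_succ (k : ℕ) : Dp p (k+1) = Dp p k * (1 - 1 / p ^ (k+1)) :=
  Finset.prod_Icc_succ_top (by omega) _

lemma Ep_succ (t : ℕ) : Ep p (t+1) = Ep p t * (1 - 1 / p ^ (2*(t+1))) :=
  Finset.prod_Icc_succ_top (by omega) _

/-- the summand in the key identity -/
def fA (p : ℝ) (r s : ℕ) : ℝ :=
  (1/p) ^ (Nat.choose (s+1) 2) / (Dp p s * Ep p ((r-s)/2))

lemma choose_succ (s : ℕ) : Nat.choose (s+1+1) 2 = Nat.choose (s+1) 2 + (s+1) := by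
  have h := Nat.choose_succ_succ (s+1) 1
  rw [Nat.choose_one_right] at h
  norm_num at h ⊢
  omega

private lemma alg1 (a D E e : ℝ) (hD : D ≠ 0) (hE : E ≠ 0) (he : 1 - e ≠ 0) :
    a/(D*(E*(1-e))) - a/(D*E) = e * (a/(D*(E*(1-e)))) := by
  field_simp
  ring

private lemma alg2 (a D E u v : ℝ) (hD : D ≠ 0) (hE : E ≠ 0) (hu : 1 - u ≠ 0) :
    ((v*u) * ((a*u)/(D*(1-u)*E)) - v * ((a*u)/(D*(1-u)*E)))
      + (v*u) * (a/(D*E)) = 0 := by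
  field_simp
  ring

lemma fdiff (hp : 1 < p) {r s : ℕ} (hs : s ≤ r) :
    fA p (r+1) s - fA p r s
      = if 2 ∣ (r+1-s) then (1/p)^(r+1-s) * fA p (r+1) s else 0 := by
  by_cases h2 : 2 ∣ (r+1-s)
  · rw [if_pos h2]
    obtain ⟨t, ht⟩ := h2
    obtain ⟨t', rfl⟩ : ∃ t', t = t' + 1 := ⟨t - 1, by omega⟩
    have h1 : (r+1-s)/2 = t' + 1 := by omega
    have hexp : r + 1 - s = 2*(t'+1) := by omega
    have h0 : (r-s)/2 = t' := by omega
    rw [fA, fA, h1, h0, hexp, Ep_succ, qp p (2*(t'+1))]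
    exact alg1 _ _ _ _ (Dp_pos hp s).ne' (Ep_pos hp t').ne'
      (by have := fac_pos hp (j := 2*(t'+1)) (by omega); linarith)
  · rw [if_neg h2]
    have h : (r+1-s)/2 = (r-s)/2 := by omega
    rw [fA, fA, h, sub_self]

lemma paircore (hp : 1 < p) {r s : ℕ} (h : s ≤ r) (hd : 2 ∣ (r - s)) :
    ((1/p)^(r+1) * fA p (r+1) (s+1)
      - (1/p)^(r+1-(s+1)) * fA p (r+1) (s+1))
      + (1/p)^(r+1) * fA p (r+1) s = 0 := by
  obtain ⟨k, hk⟩ : ∃ k, r - s = k := ⟨_, rfl⟩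
  have hr1 : r + 1 = k + (s+1) := by omega
  have he1 : r + 1 - (s+1) = k := by omega
  have hi1 : (r+1-(s+1))/2 = k/2 := by omega
  have hi2 : (r+1-s)/2 = k/2 := by omega
  rw [fA, fA, hi1, hi2, he1, hr1, choose_succ, Dp_succ,
    pow_add (1/p) k (s+1), pow_add (1/p) (Nat.choose (s+1) 2) (s+1), qp p (s+1)]
  exact alg2 _ _ _ _ _ (Dp_pos hp s).ne' (Ep_pos hp (k/2)).ne'
    (by have := fac_pos hp (j := s+1) (by omega); linarith)

lemma pairing (hp : 1 < p) (r : ℕ) :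
    ∑ s ∈ range (r+2), ((1/p)^(r+1) * fA p (r+1) s
      - (if 2 ∣ (r+1-s) then (1/p)^(r+1-s) * fA p (r+1) s else 0)) = 0 := by
  refine Finset.sum_involution
    (fun s _ => if 2 ∣ (r+1-s) then s - 1 else s + 1) ?_ ?_ ?_ ?_
  · intro s hs
    simp only [mem_range] at hs
    by_cases h2 : 2 ∣ (r+1-s)
    · simp only [if_pos h2]
      rcases Nat.eq_zero_or_pos s with h0 | h0
      · subst h0
        simp only [Nat.zero_sub, Nat.sub_zero] at h2 ⊢
        rw [if_pos h2]
        ring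
      · obtain ⟨s', rfl⟩ : ∃ s', s = s' + 1 := ⟨s - 1, by omega⟩
        have hne : ¬ 2 ∣ (r+1-s') := by omega
        have hss : s' ≤ r := by omega
        have hdd : 2 ∣ (r - s') := by omega
        simp only [Nat.add_sub_cancel, if_pos h2, if_neg hne, sub_zero]
        have hpc := paircore hp hss hdd
        have he : r + 1 - (s'+1) = r - s' := by omega
        rw [he] at hpc ⊢
        linarith [hpc]
    · simp only [if_neg h2]
      have hss : s ≤ r := by omega
      have hdd : 2 ∣ (r - s) := by omega
      have h2' : 2 ∣ (r+1-(s+1)) := by omega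
      simp only [if_neg h2, if_pos h2', sub_zero]
      have hpc := paircore hp hss hdd
      linarith [hpc]
  · intro s hs hne
    by_cases h2 : 2 ∣ (r+1-s)
    · simp only [if_pos h2]
      rcases Nat.eq_zero_or_pos s with h0 | h0
      · exfalso; apply hne
        subst h0
        simp only [Nat.sub_zero] at h2 ⊢
        rw [if_pos h2]
        ring
      · omega
    · simp only [if_neg h2]; omega
  · intro s hs
    simp only [mem_range] at hs ⊢
    by_cases h2 : 2 ∣ (r+1-s)
    · simp only [if_pos h2]; omega
    · simp only [if_neg h2]; omega
  · intro s hs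
    simp only [mem_range] at hs
    by_cases h2 : 2 ∣ (r+1-s)
    · simp only [if_pos h2]
      rcases Nat.eq_zero_or_pos s with h0 | h0
      · subst h0; simp only [Nat.zero_sub, if_pos h2]
      · have hne : ¬ 2 ∣ (r+1-(s-1)) := by omega
        simp only [if_neg hne]; omega
    · simp only [if_neg h2]
      have h2' : 2 ∣ (r+1-(s+1)) := by omega
      simp only [if_pos h2']
      omega

/-- The key finite identity. -/
theorem sumA (hp : 1 < p) (r : ℕ) :
    ∑ s ∈ range (r+1), fA p r s = (Dp p r)⁻¹ := by
  induction r with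
  | zero => simp [fA, Dp, Ep]
  | succ r ih =>
      have key1 : ∑ s ∈ range (r+2), fA p (r+1) s - ∑ s ∈ range (r+1), fA p r s
          = ∑ s ∈ range (r+2), (if 2 ∣ (r+1-s) then (1/p)^(r+1-s) * fA p (r+1) s else 0) := by
        rw [Finset.sum_range_succ (f := fA p (r+1))]
        rw [Finset.sum_range_succ
          (f := fun s => (if 2 ∣ (r+1-s) then (1/p)^(r+1-s) * fA p (r+1) s else 0))]
        have hlast : (if 2 ∣ (r+1-(r+1)) then (1/p)^(r+1-(r+1)) * fA p (r+1) (r+1) else 0)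
            = fA p (r+1) (r+1) := by simp
        rw [hlast]
        have hmid : ∑ s ∈ range (r+1), fA p (r+1) s - ∑ s ∈ range (r+1), fA p r s
            = ∑ s ∈ range (r+1), (if 2 ∣ (r+1-s) then (1/p)^(r+1-s) * fA p (r+1) s else 0) := by
          rw [← Finset.sum_sub_distrib]
          exact Finset.sum_congr rfl fun s hs =>
            fdiff hp (by simp only [mem_range] at hs; omega)
        linarith [hmid]
      have key2 := pairing hp r
      rw [Finset.sum_sub_distrib, ← Finset.mul_sum] at key2
      set S := ∑ s ∈ range (r+2), fA p (r+1) s with hS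
      have hrec : S - (Dp p r)⁻¹ = (1/p)^(r+1) * S := by
        rw [ih] at key1; linarith [key1, key2]
      have hDr := (Dp_pos hp r).ne'
      have hfac := fac_pos hp (j := r+1) (by omega)
      have hp0 : p ≠ 0 := by linarith
      have hS_eq : S * (1 - 1/p^(r+1)) = (Dp p r)⁻¹ := by
        rw [← qp p (r+1)]
        have hexp : S * (1 - (1/p)^(r+1)) = S - (1/p)^(r+1) * S := by ring
        rw [hexp]; linarith [hrec]
      have hne : (1 - 1/p^(r+1)) ≠ 0 := by linarith
      rw [Dp_succ, mul_inv, ← hS_eq, mul_assoc, mul_inv_cancel₀ hne, mul_one]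
/-! ### chunk 2 : partitions -/

def wt (p : ℝ) (l : Ptn) : ℝ :=
  (p ^ (l.nStat + l.size) * ∏ i ∈ Finset.Icc 1 l.size, Ep p (l.mult i / 2))⁻¹

lemma Ptn.ext' {a b : Ptn} (h : a.1 = b.1) : a = b := Subtype.ext h

lemma part_le_size {l : Ptn} {x : ℕ} (hx : x ∈ l.1) : x ≤ l.size :=
  Multiset.single_le_sum (fun _ _ => Nat.zero_le _) x hx

lemma col_eq_zero {l : Ptn} {i : ℕ} (hi : l.size < i) : l.col i = 0 := by
  rw [Ptn.col, Multiset.card_eq_zero, Multiset.filter_eq_nil]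
  intro a ha hle
  have := part_le_size ha
  omega

lemma mult_eq_zero {l : Ptn} {i : ℕ} (hi : l.size < i) : l.mult i = 0 := by
  rw [Ptn.mult, Multiset.count_eq_zero]
  intro ha
  have := part_le_size ha
  omega

lemma Ep_zero : Ep p 0 = 1 := by simp [Ep]

lemma nStat_ext {l : Ptn} {N : ℕ} (hN : l.size ≤ N) :
    l.nStat = ∑ i ∈ Icc 1 N, Nat.choose (l.col i) 2 := by
  refine Finset.sum_subset (Finset.Icc_subset_Icc_right hN) fun x hx hnx => ?_
  simp only [mem_Icc] at hx hnx
  rw [col_eq_zero (by omega)]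
  rfl

lemma prodE_ext (p : ℝ) {l : Ptn} {N : ℕ} (hN : l.size ≤ N) :
    ∏ i ∈ Icc 1 l.size, Ep p (l.mult i / 2) = ∏ i ∈ Icc 1 N, Ep p (l.mult i / 2) := by
  refine Finset.prod_subset (Finset.Icc_subset_Icc_right hN) fun x hx hnx => ?_
  simp only [mem_Icc] at hx hnx
  rw [mult_eq_zero (by omega)]
  exact Ep_zero

lemma sum_Icc_one {M : Type*} [AddCommMonoid M] (f : ℕ → M) (N : ℕ) :
    ∑ i ∈ Icc 1 N, f i = ∑ i ∈ range N, f (1+i) := by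
  rw [← Finset.Ico_add_one_right_eq_Icc, Finset.sum_Ico_eq_sum_range]
  simp

lemma prod_Icc_one {M : Type*} [CommMonoid M] (f : ℕ → M) (N : ℕ) :
    ∏ i ∈ Icc 1 N, f i = ∏ i ∈ range N, f (1+i) := by
  rw [← Finset.Ico_add_one_right_eq_Icc, Finset.prod_Ico_eq_prod_range]
  simp

/-- add a column of height `r` to a partition with at most `r` parts -/
def pushMap (r : ℕ) (μ : Ptn) : Ptn :=
  ⟨μ.1.map (·+1) + Multiset.replicate (r - μ.numParts) 1, by
    intro x hx
    rcases Multiset.mem_add.mp hx with h | h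
    · rcases Multiset.mem_map.mp h with ⟨a, _, rfl⟩; omega
    · rw [Multiset.eq_of_mem_replicate h]; omega⟩

variable {r : ℕ} {μ : Ptn}

lemma pm_numParts (hc : μ.numParts ≤ r) : (pushMap r μ).numParts = r := by
  have : μ.numParts = Multiset.card μ.1 := rfl
  simp only [pushMap, Ptn.numParts, Multiset.card_add, Multiset.card_map,
    Multiset.card_replicate]
  omega

lemma pm_size (hc : μ.numParts ≤ r) : (pushMap r μ).size = μ.size + r := by
  have h1 : (Multiset.map (·+1) μ.1).sum = μ.1.sum + Multiset.card μ.1 := by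
    have := Multiset.sum_map_add (m := μ.1) (f := fun i => i) (g := fun _ => 1)
    simpa [Multiset.map_id', Multiset.map_const', Multiset.sum_replicate] using this
  have h2 : (Multiset.replicate (r - μ.numParts) 1).sum = r - μ.numParts := by
    simp [Multiset.sum_replicate]
  have hc' : μ.numParts = Multiset.card μ.1 := rfl
  simp only [pushMap, Ptn.size, Multiset.sum_add, h1, h2]
  have : μ.size = μ.1.sum := rfl
  omega

lemma pm_mult_one (hc : μ.numParts ≤ r) : (pushMap r μ).mult 1 = r - μ.numParts := by
  have h1 : Multiset.count 1 (Multiset.map (·+1) μ.1) = 0 := by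
    rw [Multiset.count_eq_zero]
    intro h
    rcases Multiset.mem_map.mp h with ⟨a, ha, hae⟩
    have := μ.2 a ha
    omega
  simp only [pushMap, Ptn.mult, Multiset.count_add, h1, Multiset.count_replicate_self, zero_add]

lemma pm_mult (k : ℕ) : (pushMap r μ).mult (1+(k+1)) = μ.mult (1+k) := by
  have h1 : Multiset.count (1+(k+1)) (Multiset.map (·+1) μ.1) = Multiset.count (1+k) μ.1 := by
    have := Multiset.count_map_eq_count' (·+1) μ.1 (add_left_injective 1) (1+k)
    exact this
  have h2 : Multiset.count (1+(k+1)) (Multiset.replicate (r - μ.numParts) 1) = 0 := by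
    rw [Multiset.count_replicate, if_neg (by omega)]
  simp only [pushMap, Ptn.mult, Multiset.count_add, h1, h2, add_zero]

lemma pm_col_one (hc : μ.numParts ≤ r) : (pushMap r μ).col 1 = r := by
  rw [Ptn.col]
  have : Multiset.filter (fun x => 1 ≤ x) (pushMap r μ).1 = (pushMap r μ).1 :=
    Multiset.filter_eq_self.mpr fun a ha => (pushMap r μ).2 a ha
  rw [this]
  exact pm_numParts hc

lemma pm_col (k : ℕ) : (pushMap r μ).col (1+(k+1)) = μ.col (1+k) := by
  rw [Ptn.col, Ptn.col, pushMap, Multiset.filter_add, Multiset.card_add]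
  have h2 : Multiset.filter (fun x => 1+(k+1) ≤ x) (Multiset.replicate (r - μ.numParts) 1) = 0 :=
    Multiset.filter_eq_nil.mpr fun a ha => by rw [Multiset.eq_of_mem_replicate ha]; omega
  have h1 : Multiset.filter (fun x => 1+(k+1) ≤ x) (Multiset.map (·+1) μ.1)
      = Multiset.map (·+1) (Multiset.filter (fun a => 1+k ≤ a) μ.1) := by
    rw [Multiset.filter_map]
    congr 1
    exact Multiset.filter_congr fun x _ => by simp only [Function.comp_apply]; omega
  rw [h1, h2]
  simp

lemma pm_nStat (hr : 1 ≤ r) (hc : μ.numParts ≤ r) :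
    (pushMap r μ).nStat = Nat.choose r 2 + μ.nStat := by
  obtain ⟨N, hN⟩ : ∃ N, μ.size + r = N + 1 := ⟨μ.size + r - 1, by omega⟩
  rw [Ptn.nStat, pm_size hc, sum_Icc_one, hN, Finset.sum_range_succ']
  have h0 : (pushMap r μ).col (1+0) = r := pm_col_one hc
  rw [h0]
  have hterm : ∀ k, Nat.choose ((pushMap r μ).col (1+(k+1))) 2
      = Nat.choose (μ.col (1+k)) 2 := fun k => by rw [pm_col k]
  rw [Finset.sum_congr rfl fun k _ => hterm k]
  rw [← sum_Icc_one (fun i => Nat.choose (μ.col i) 2) N]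
  rw [← nStat_ext (by omega)]
  omega

lemma pm_prodE (p : ℝ) (hr : 1 ≤ r) (hc : μ.numParts ≤ r) :
    ∏ i ∈ Icc 1 (pushMap r μ).size, Ep p ((pushMap r μ).mult i / 2)
      = Ep p ((r - μ.numParts)/2) * ∏ i ∈ Icc 1 μ.size, Ep p (μ.mult i / 2) := by
  obtain ⟨N, hN⟩ : ∃ N, μ.size + r = N + 1 := ⟨μ.size + r - 1, by omega⟩
  rw [pm_size hc, prod_Icc_one, hN, Finset.prod_range_succ']
  have h0 : (pushMap r μ).mult (1+0) = r - μ.numParts := pm_mult_one hc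
  rw [h0]
  have hterm : ∀ k, Ep p ((pushMap r μ).mult (1+(k+1)) / 2)
      = Ep p (μ.mult (1+k) / 2) := fun k => by rw [pm_mult k]
  rw [Finset.prod_congr rfl fun k _ => hterm k]
  rw [← prod_Icc_one (fun i => Ep p (μ.mult i / 2)) N]
  rw [← prodE_ext p (by omega), mul_comm]

lemma pm_wt (hp : 1 < p) (hr : 1 ≤ r) (hc : μ.numParts ≤ r) :
    wt p (pushMap r μ)
      = (1/p)^(Nat.choose (r+1) 2) * (wt p μ * (Ep p ((r - μ.numParts)/2))⁻¹) := by
  have hp0 : (0:ℝ) < p := by linarith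
  have hT : (pushMap r μ).nStat + (pushMap r μ).size
      = (μ.nStat + μ.size) + Nat.choose (r+1) 2 := by
    rw [pm_nStat hr hc, pm_size hc]
    have h := Nat.choose_succ_succ r 1
    rw [Nat.choose_one_right] at h
    norm_num at h ⊢
    omega
  rw [wt, wt, hT, pm_prodE p hr hc, pow_add, qp]
  have hE := (Ep_pos hp ((r - μ.numParts)/2)).ne'
  have hPm : (0:ℝ) < ∏ i ∈ Icc 1 μ.size, Ep p (μ.mult i / 2) :=
    Finset.prod_pos fun i _ => Ep_pos hp _
  have hppow : (0:ℝ) < p ^ (μ.nStat + μ.size) := pow_pos hp0 _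
  have hppow2 : (0:ℝ) < p ^ (Nat.choose (r+1) 2) := pow_pos hp0 _
  field_simp

/-- the equivalence between partitions with at most `r` parts and those with exactly
`r` parts -/
def eqv (r : ℕ) : {m : Ptn // m.numParts ≤ r} ≃ {l : Ptn // l.numParts = r} where
  toFun := fun μ => ⟨pushMap r μ.1, pm_numParts μ.2⟩
  invFun := fun l => ⟨⟨(l.1.1.filter (fun x => 2 ≤ x)).map (·-1), by
      intro x hx
      rcases Multiset.mem_map.mp hx with ⟨a, ha, rfl⟩
      have := (Multiset.mem_filter.mp ha).2
      omega⟩, by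
    show Multiset.card (Multiset.map _ _) ≤ r
    rw [Multiset.card_map]
    calc Multiset.card (Multiset.filter _ l.1.1) ≤ Multiset.card l.1.1 :=
          Multiset.card_le_card (Multiset.filter_le _ _)
      _ = r := l.2⟩
  left_inv := by
    rintro ⟨μ, hc⟩
    apply Subtype.ext
    apply Ptn.ext'
    show (Multiset.filter _ (Multiset.map (·+1) μ.1 + Multiset.replicate _ 1)).map (·-1) = μ.1
    rw [Multiset.filter_add]
    have h2 : Multiset.filter (fun x => 2 ≤ x) (Multiset.replicate (r - Ptn.numParts μ) 1) = 0 :=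
      Multiset.filter_eq_nil.mpr fun a ha => by rw [Multiset.eq_of_mem_replicate ha]; omega
    have h1 : Multiset.filter (fun x => 2 ≤ x) (Multiset.map (·+1) μ.1)
        = Multiset.map (·+1) μ.1 :=
      Multiset.filter_eq_self.mpr fun a ha => by
        rcases Multiset.mem_map.mp ha with ⟨b, hb, rfl⟩
        have := μ.2 b hb; omega
    rw [h1, h2, add_zero, Multiset.map_map]
    rw [Multiset.map_congr rfl (fun x _ => (by simp : ((·-1) ∘ (·+1)) x = id x))]
    exact Multiset.map_id μ.1
  right_inv := by
    rintro ⟨l, hl⟩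
    apply Subtype.ext
    apply Ptn.ext'
    show Multiset.map (·+1) (Multiset.map (·-1) (Multiset.filter _ l.1)) + _ = l.1
    rw [Multiset.map_map]
    have h1 : Multiset.map ((·+1) ∘ (·-1)) (Multiset.filter (fun x => 2 ≤ x) l.1)
        = Multiset.filter (fun x => 2 ≤ x) l.1 := by
      rw [Multiset.map_congr rfl (fun x hx => by
        have := (Multiset.mem_filter.mp hx).2
        show x - 1 + 1 = id x
        simp only [id]
        omega)]
      exact Multiset.map_id _
    rw [h1]
    have hsplit := Multiset.filter_add_not (fun x => 2 ≤ x) l.1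
    have hcard : Multiset.card (Multiset.filter (fun x => 2 ≤ x) l.1)
        + Multiset.card (Multiset.filter (fun x => ¬ 2 ≤ x) l.1) = r := by
      rw [← Multiset.card_add, hsplit]; exact hl
    have hrep : Multiset.filter (fun x => ¬ 2 ≤ x) l.1
        = Multiset.replicate (r - Multiset.card (Multiset.map (·-1) (Multiset.filter (fun x => 2 ≤ x) l.1))) 1 := by
      rw [Multiset.eq_replicate]
      constructor
      · rw [Multiset.card_map]; omega
      · intro b hb
        have h2 := (Multiset.mem_filter.mp hb).2
        have h3 := l.2 b (Multiset.mem_filter.mp hb).1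
        omega
    show _ + Multiset.replicate (r - Ptn.numParts _) 1 = l.1
    have : Ptn.numParts (⟨Multiset.map (·-1) (Multiset.filter (fun x => 2 ≤ x) l.1), by
        intro x hx
        rcases Multiset.mem_map.mp hx with ⟨a, ha, rfl⟩
        have := (Multiset.mem_filter.mp ha).2
        omega⟩ : Ptn) = Multiset.card (Multiset.map (·-1) (Multiset.filter (fun x => 2 ≤ x) l.1)) := rfl
    rw [this, ← hrep]
    exact hsplit

/-! ### chunk 3 : summability -/

lemma wt_pos (hp : 1 < p) (l : Ptn) : 0 < wt p l := by
  rw [wt]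
  have hP : (0:ℝ) < ∏ i ∈ Icc 1 l.size, Ep p (l.mult i / 2) :=
    Finset.prod_pos fun i _ => Ep_pos hp _
  have := pow_pos (show (0:ℝ) < p by linarith) (l.nStat + l.size)
  positivity

lemma Ep_ge (hp : 1 < p) (t : ℕ) : (1 - 1/p^2)^t ≤ Ep p t := by
  rw [Ep]
  have h := Finset.prod_le_prod (s := Icc 1 t) (f := fun _ => 1 - 1/p^2)
    (g := fun j => 1 - 1/p^(2*j))
    (fun i _ => le_of_lt (fac_pos hp (by omega)))
    (fun i hi => by
      have h1 : (0:ℝ) < p := by linarith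
      have : (p:ℝ)^2 ≤ p^(2*i) := pow_le_pow_right₀ (by linarith) (by
        have := (mem_Icc.mp hi).1; omega)
      have h2 : (0:ℝ) < p^2 := by positivity
      have h3 : (0:ℝ) < p^(2*i) := by positivity
      have := one_div_le_one_div_of_le h2 this
      linarith)
  simpa [Nat.card_Icc] using h

lemma Ep_ge' (hp : 1 < p) (m : ℕ) : (1 - 1/p^2)^m ≤ Ep p (m / 2) := by
  refine le_trans ?_ (Ep_ge hp (m/2))
  exact pow_le_pow_of_le_one (by have := fac_pos hp (j := 2) (by omega); linarith)
    (fac_le_one hp 2) (by omega)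

lemma mult_sum (l : Ptn) : ∑ i ∈ Icc 1 l.size, l.mult i = l.numParts := by
  exact Multiset.sum_count_eq_card fun a ha =>
    mem_Icc.mpr ⟨l.2 a ha, part_le_size ha⟩

lemma prodE_ge (hp : 1 < p) (l : Ptn) :
    (1 - 1/p^2)^l.numParts ≤ ∏ i ∈ Icc 1 l.size, Ep p (l.mult i / 2) := by
  have h1 : ((1:ℝ) - 1/p^2)^l.numParts = ∏ i ∈ Icc 1 l.size, (1 - 1/p^2)^(l.mult i) := by
    rw [Finset.prod_pow_eq_pow_sum, mult_sum]
  rw [h1]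
  exact Finset.prod_le_prod
    (fun i _ => pow_nonneg (by have := fac_pos hp (j := 2) (by omega); linarith) _)
    (fun i _ => Ep_ge' hp _)

lemma wt_le (hp : 1 < p) (l : Ptn) :
    wt p l ≤ ((1 - 1/p^2)^l.numParts)⁻¹ * (1/p)^l.size := by
  have hq : (0:ℝ) < 1 - 1/p^2 := fac_pos hp (by omega)
  have hp0 : (0:ℝ) < p := by linarith
  have hPle := prodE_ge hp l
  have hPq : (0:ℝ) < (1 - 1/p^2)^l.numParts := by positivity
  have hA : (p:ℝ)^l.size ≤ p^(l.nStat + l.size) := pow_le_pow_right₀ (by linarith) (by omega)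
  have hA0 : (0:ℝ) < p^l.size := by positivity
  have hP0 : (0:ℝ) < ∏ i ∈ Icc 1 l.size, Ep p (l.mult i / 2) :=
    Finset.prod_pos fun i _ => Ep_pos hp _
  rw [wt, mul_inv]
  have h1 : (p ^ (l.nStat + l.size))⁻¹ ≤ (p^l.size)⁻¹ :=
    inv_anti₀ hA0 hA
  have h2 : (∏ i ∈ Icc 1 l.size, Ep p (l.mult i / 2))⁻¹ ≤ ((1 - 1/p^2)^l.numParts)⁻¹ :=
    inv_anti₀ hPq hPle
  calc (p ^ (l.nStat + l.size))⁻¹ * (∏ i ∈ Icc 1 l.size, Ep p (l.mult i / 2))⁻¹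
      ≤ (p^l.size)⁻¹ * ((1 - 1/p^2)^l.numParts)⁻¹ :=
        mul_le_mul h1 h2 (by positivity) (by positivity)
    _ = ((1 - 1/p^2)^l.numParts)⁻¹ * (p^l.size)⁻¹ := by ring
    _ = ((1 - 1/p^2)^l.numParts)⁻¹ * (1/p)^l.size := by rw [qp p l.size, one_div (p ^ l.size)]

lemma summable_pi (hp : 1 < p) (s : ℕ) :
    Summable (fun v : Fin s → ℕ => ∏ i, (1/p)^(v i)) := by
  have hq0 : (0:ℝ) ≤ 1/p := by positivity
  have hq1 : 1/p < 1 := by rw [div_lt_one (by linarith)]; exact hp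
  induction s with
  | zero =>
      exact summable_of_finite_support (Set.Finite.subset (Set.finite_univ) (by simp))
  | succ s ih =>
      rw [← (Fin.consEquiv fun _ => ℕ).summable_iff]
      have : ((fun v : Fin (s+1) → ℕ => ∏ i, (1/p)^(v i)) ∘ (Fin.consEquiv fun _ => ℕ))
          = fun x : ℕ × (Fin s → ℕ) => (1/p)^x.1 * ∏ i, (1/p)^(x.2 i) := by
        funext x
        simp [Fin.consEquiv, Fin.prod_univ_succ, Fin.cons_succ, Fin.cons_zero,
          mul_comm]
      rw [this]
      exact Summable.mul_of_nonneg (f := fun n : ℕ => (1/p)^n)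
        (g := fun v : Fin s → ℕ => ∏ i, (1/p)^(v i))
        (summable_geometric_of_lt_one hq0 hq1) ih
        (fun n => by positivity) (fun v => by positivity)

def emb (s : ℕ) (l : {l : Ptn // l.numParts = s}) : Fin s → ℕ :=
  fun i => (l.1.1.sort (· ≤ ·)).getD i 0

lemma emb_length (s : ℕ) (l : {l : Ptn // l.numParts = s}) :
    (l.1.1.sort (· ≤ ·)).length = s := by
  rw [Multiset.length_sort]; exact l.2

lemma emb_inj (s : ℕ) : Function.Injective (emb s) := by
  intro a b hab
  have hla := emb_length s a
  have hlb := emb_length s b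
  have : (a.1.1.sort (· ≤ ·)) = (b.1.1.sort (· ≤ ·)) := by
    apply List.ext_getElem (by omega)
    intro n hn1 hn2
    have hfn := congrFun hab ⟨n, by omega⟩
    rw [emb, emb] at hfn
    rw [List.getD_eq_getElem _ 0 (by exact hn1), List.getD_eq_getElem _ 0 (by exact hn2)] at hfn
    exact hfn
  apply Subtype.ext; apply Ptn.ext'
  rw [← Multiset.sort_eq a.1.1 (· ≤ ·), ← Multiset.sort_eq b.1.1 (· ≤ ·), this]

lemma emb_sum (s : ℕ) (l : {l : Ptn // l.numParts = s}) :
    ∑ i : Fin s, emb s l i = l.1.size := by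
  have hl := emb_length s l
  have h1 : l.1.size = (l.1.1.sort (· ≤ ·)).sum := by
    show l.1.1.sum = _
    conv_lhs => rw [← Multiset.sort_eq l.1.1 (· ≤ ·)]
    rw [Multiset.sum_coe]
  calc ∑ i : Fin s, emb s l i
      = ∑ i : Fin s, (l.1.1.sort (· ≤ ·)).getD ↑i 0 := rfl
    _ = ∑ i ∈ range s, (l.1.1.sort (· ≤ ·)).getD i 0 :=
        Fin.sum_univ_eq_sum_range (fun n => (l.1.1.sort (· ≤ ·)).getD n 0) s
    _ = ∑ i ∈ range (l.1.1.sort (· ≤ ·)).length, (l.1.1.sort (· ≤ ·)).getD i 0 := by rw [hl]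
    _ = ∑ i : Fin (l.1.1.sort (· ≤ ·)).length, (l.1.1.sort (· ≤ ·)).getD i 0 :=
        (Fin.sum_univ_eq_sum_range (fun n => (l.1.1.sort (· ≤ ·)).getD n 0) _).symm
    _ = ∑ i : Fin (l.1.1.sort (· ≤ ·)).length, (l.1.1.sort (· ≤ ·)).get i :=
        Finset.sum_congr rfl (fun i _ => by
          rw [List.getD_eq_getElem _ 0 i.2, List.get_eq_getElem])
    _ = (l.1.1.sort (· ≤ ·)).sum := Fin.sum_univ_getElem _
    _ = l.1.size := h1.symm

lemma summable_qsize (hp : 1 < p) (s : ℕ) :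
    Summable (fun l : {l : Ptn // l.numParts = s} => (1/p)^(l.1.size)) := by
  have h := (summable_pi hp s).comp_injective (emb_inj s)
  have : ((fun v : Fin s → ℕ => ∏ i, (1/p)^(v i)) ∘ emb s)
      = fun l : {l : Ptn // l.numParts = s} => (1/p)^(l.1.size) := by
    funext l
    simp only [Function.comp_apply]
    rw [Finset.prod_pow_eq_pow_sum, emb_sum]
  rwa [this] at h

lemma summable_wt (hp : 1 < p) (s : ℕ) :
    Summable (fun l : {l : Ptn // l.numParts = s} => wt p l.1) := by
  refine Summable.of_nonneg_of_le (fun l => (wt_pos hp l.1).le) (fun l => ?_)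
    (((summable_qsize hp s).mul_left (((1 - 1/p^2)^s)⁻¹)))
  have := wt_le hp l.1
  rwa [l.2] at this


/-! ### chunk 4 : the tsum recursion and closed form -/

def Xr (p : ℝ) (r : ℕ) : ℝ := ∑' l : {l : Ptn // l.numParts = r}, wt p l.1

lemma wt_empty (h : ∀ x ∈ (0 : Multiset ℕ), 0 < x) : wt p (⟨0, h⟩ : Ptn) = 1 := by
  have h1 : Ptn.size ⟨0, h⟩ = 0 := rfl
  have h2 : Ptn.nStat ⟨0, h⟩ = 0 := by simp [Ptn.nStat, h1]
  unfold wt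
  rw [h1, h2]
  simp

lemma Xr_zero (hp : 1 < p) : Xr p 0 = 1 := by
  have hpos : ∀ x ∈ (0 : Multiset ℕ), 0 < x := by intro y hy; simp at hy
  have hsub : ∀ x : {l : Ptn // l.numParts = 0}, x = ⟨⟨0, hpos⟩, rfl⟩ := by
    rintro ⟨⟨m, hm⟩, hx⟩
    have : m = 0 := Multiset.card_eq_zero.mp hx
    subst this; rfl
  rw [Xr, tsum_eq_single (⟨⟨0, hpos⟩, rfl⟩ : {l : Ptn // l.numParts = 0})
    (fun b hb => absurd (hsub b) hb)]
  exact wt_empty hpos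

lemma Xr_rec (hp : 1 < p) {r : ℕ} (hr : 1 ≤ r) :
    Xr p r = (1/p)^(Nat.choose (r+1) 2)
      * ∑ s ∈ range (r+1), Xr p s * (Ep p ((r-s)/2))⁻¹ := by
  set g : Ptn → ℝ := fun m => wt p m * (Ep p ((r - m.numParts)/2))⁻¹ with hg
  have hstep1 : Xr p r = ∑' μ : {m : Ptn // m.numParts ≤ r}, wt p (pushMap r μ.1) := by
    rw [Xr, ← Equiv.tsum_eq (eqv r) (fun l => wt p l.1)]
    rfl
  have hstep2 : ∀ μ : {m : Ptn // m.numParts ≤ r}, wt p (pushMap r μ.1)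
      = (1/p)^(Nat.choose (r+1) 2) * g μ.1 := fun μ => pm_wt hp hr μ.2
  rw [hstep1, tsum_congr hstep2, tsum_mul_left]
  congr 1
  have hsummable : ∀ s : ℕ, Summable (fun l : {m : Ptn // m.numParts = s} => g l.1) := by
    intro s
    apply Summable.congr ((summable_wt hp s).mul_right ((Ep p ((r-s)/2))⁻¹))
    intro l
    simp only [hg]
    rw [l.2]
  have hsummable' : ∀ s : ℕ, Summable ({m : Ptn | m.numParts = s}.indicator g) := by
    intro s
    rw [← summable_subtype_iff_indicator]
    exact hsummable s
  have hind : ({m : Ptn | m.numParts ≤ r}.indicator g)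
      = fun m => ∑ s ∈ range (r+1), ({m : Ptn | m.numParts = s}.indicator g) m := by
    funext m
    by_cases hm : m.numParts ≤ r
    · rw [Set.indicator_of_mem (show m ∈ {m : Ptn | m.numParts ≤ r} from hm)]
      rw [Finset.sum_eq_single m.numParts
        (fun b _ hbne => Set.indicator_of_notMem
          (show m ∉ {m : Ptn | m.numParts = b} from fun hmem => hbne (hmem ▸ rfl)) g)
        (fun hne => absurd (mem_range.mpr (by omega)) hne)]
      exact (Set.indicator_of_mem (show m ∈ {m : Ptn | m.numParts = m.numParts} from rfl) g).symm
    · rw [Set.indicator_of_notMem (show m ∉ {m : Ptn | m.numParts ≤ r} from hm)]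
      symm
      apply Finset.sum_eq_zero
      intro s hs
      apply Set.indicator_of_notMem
      intro hmem
      simp only [Set.mem_setOf_eq] at hmem
      simp only [mem_range] at hs
      omega
  calc ∑' μ : {m : Ptn // m.numParts ≤ r}, g μ.1
      = ∑' m : Ptn, ({m : Ptn | m.numParts ≤ r}.indicator g) m := _root_.tsum_subtype _ g
    _ = ∑' m : Ptn, ∑ s ∈ range (r+1), ({m : Ptn | m.numParts = s}.indicator g) m := by
        rw [hind]
    _ = ∑ s ∈ range (r+1), ∑' m : Ptn, ({m : Ptn | m.numParts = s}.indicator g) m :=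
        Summable.tsum_finsetSum (fun s _ => hsummable' s)
    _ = ∑ s ∈ range (r+1), ∑' l : {m : Ptn // m.numParts = s}, g l.1 :=
        Finset.sum_congr rfl fun s _ => (_root_.tsum_subtype {m : Ptn | m.numParts = s} g).symm
    _ = ∑ s ∈ range (r+1), Xr p s * (Ep p ((r-s)/2))⁻¹ := by
        refine Finset.sum_congr rfl fun s _ => ?_
        have hptw : ∀ l : {m : Ptn // m.numParts = s},
            g l.1 = wt p l.1 * (Ep p ((r-s)/2))⁻¹ := fun l => by
          simp only [hg]; rw [l.2]
        rw [tsum_congr hptw, tsum_mul_right, Xr]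

lemma Xr_val (hp : 1 < p) : ∀ r, Xr p r = (1/p)^(Nat.choose (r+1) 2) * (Dp p r)⁻¹ := by
  intro r
  induction r using Nat.strong_induction_on with
  | _ r ih =>
    rcases Nat.eq_zero_or_pos r with rfl | hr
    · rw [Xr_zero hp]; simp [Dp]
    · have hrec := Xr_rec hp hr
      rw [Finset.sum_range_succ] at hrec
      have hlast : Xr p r * (Ep p ((r-r)/2))⁻¹ = Xr p r := by
        rw [Nat.sub_self]
        simp [Ep_zero]
      have h3 : fA p r r = (1/p)^(Nat.choose (r+1) 2) * (Dp p r)⁻¹ := by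
        rw [fA, Nat.sub_self]
        rw [show (0:ℕ)/2 = 0 from rfl, Ep_zero, mul_one, div_eq_mul_inv]
      have hsum : ∑ s ∈ range r, Xr p s * (Ep p ((r-s)/2))⁻¹
          = (Dp p r)⁻¹ - (1/p)^(Nat.choose (r+1) 2) * (Dp p r)⁻¹ := by
        have h1 : ∑ s ∈ range r, Xr p s * (Ep p ((r-s)/2))⁻¹
            = ∑ s ∈ range r, fA p r s := by
          refine Finset.sum_congr rfl fun s hs => ?_
          rw [ih s (mem_range.mp hs), fA,
            div_eq_mul_inv ((1/p)^(Nat.choose (s+1) 2)) (Dp p s * Ep p ((r-s)/2)), mul_inv]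
          ring
        have h2 := sumA hp r
        rw [Finset.sum_range_succ] at h2
        rw [h1]
        linarith [h2, h3]
      rw [hsum, hlast] at hrec
      have hT1 : 1 ≤ Nat.choose (r+1) 2 := Nat.choose_pos (by omega)
      have hqlt : (1/p)^(Nat.choose (r+1) 2) < 1 :=
        pow_lt_one₀ (by positivity) (by rw [div_lt_one (by linarith)]; linarith) (by omega)
      have key : (Xr p r - (1/p)^(Nat.choose (r+1) 2) * (Dp p r)⁻¹)
          * (1 - (1/p)^(Nat.choose (r+1) 2)) = 0 := by linear_combination hrec
      rcases mul_eq_zero.mp key with h | h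
      · linarith [h]
      · linarith [h, hqlt]

/-! ### chunk 5 : product identities for the final algebra -/

lemma OE (m : ℕ) : Op p ((m+1)/2) * Ep p (m/2) = Dp p m := by
  induction m with
  | zero => simp [Op, Ep, Dp]
  | succ m ih =>
    rcases Nat.even_or_odd m with ⟨h, rfl⟩ | ⟨h, rfl⟩
    · have e1 : (h + h + 1 + 1)/2 = h + 1 := by omega
      have e2 : (h + h + 1)/2 = h := by omega
      have e3 : (h + h)/2 = h := by omega
      rw [e2, e3] at ih
      rw [e1, e2]
      have hOp : Op p (h+1) = Op p h * (1 - 1/p^(2*(h+1)-1)) :=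
        Finset.prod_Icc_succ_top (by omega) _
      rw [hOp, Dp_succ, ← ih]
      have : 2*(h+1)-1 = h + h + 1 := by omega
      rw [this]
      ring
    · have e1 : (2*h + 1 + 1 + 1)/2 = h + 1 := by omega
      have e2 : (2*h + 1 + 1)/2 = h + 1 := by omega
      have e3 : (2*h + 1)/2 = h := by omega
      rw [e1, e2]
      rw [e2, e3] at ih
      have hEp : Ep p (h+1) = Ep p h * (1 - 1/p^(2*(h+1))) :=
        Finset.prod_Icc_succ_top (by omega) _
      rw [hEp, Dp_succ, ← ih]
      have : 2*(h+1) = 2*h + 1 + 1 := by omega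
      rw [this]
      ring

lemma Dsplit {k n : ℕ} (h : k ≤ n) :
    Dp p k * ∏ j ∈ Icc (k+1) n, (1 - 1/p^j) = Dp p n := by
  have hIcc : ∀ a b : ℕ, Icc (a+1) b = Ioc a b := fun a b => by
    ext x; simp only [mem_Icc, mem_Ioc]; omega
  rw [Dp, Dp, show (1:ℕ) = 0 + 1 from rfl, hIcc 0 k, hIcc k n, hIcc 0 n]
  exact Finset.prod_Ioc_consecutive _ (by omega) h

end PS

open PS in
theorem PSym_numParts_aux (p : ℝ) (hp : 1 < p) (n : ℕ) (hn : 0 < n)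
    (r : ℕ) (hr : r ≤ n) :
    ∑' l : {l : Ptn // l.numParts = r}, PSym p n l.1 =
      (∏ j ∈ Finset.Icc (r + 1) n, (1 - 1 / p ^ j)) /
        (p ^ Nat.choose (r + 1) 2 *
          ∏ j ∈ Finset.Icc 1 ((n - r) / 2), (1 - 1 / p ^ (2 * j))) := by
  have hp0 : (0:ℝ) < p := by linarith
  set C : ℝ := (∏ j ∈ Finset.Icc (n - r + 1) n, (1 - 1 / p ^ j)) *
      (∏ i ∈ Finset.Icc 1 ((n - r + 1) / 2), (1 - 1 / p ^ (2 * i - 1))) with hC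
  have hptw : ∀ l : {l : Ptn // l.numParts = r}, PSym p n l.1 = C * wt p l.1 := by
    intro l
    rw [PSym, if_pos (by rw [l.2]; exact hr), l.2]
    rw [div_eq_mul_inv]
    congr 1
  calc ∑' l : {l : Ptn // l.numParts = r}, PSym p n l.1
      = ∑' l : {l : Ptn // l.numParts = r}, C * wt p l.1 := tsum_congr hptw
    _ = C * Xr p r := by rw [tsum_mul_left, Xr]
    _ = _ := by
        rw [Xr_val hp r, hC]
        have hOE := OE (p := p) (n - r)
        have hD1 := Dsplit (p := p) (show n - r ≤ n by omega)
        have hD2 := Dsplit (p := p) hr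
        have hA : (0:ℝ) < ∏ j ∈ Finset.Icc (n - r + 1) n, (1 - 1 / p ^ j) :=
          Finset.prod_pos fun j hj => fac_pos hp (by have := (mem_Icc.mp hj).1; omega)
        have hG : (0:ℝ) < ∏ j ∈ Finset.Icc (r + 1) n, (1 - 1 / p ^ j) :=
          Finset.prod_pos fun j hj => fac_pos hp (by have := (mem_Icc.mp hj).1; omega)
        have hOp := Op_pos hp ((n - r + 1)/2)
        have hEp := Ep_pos hp ((n - r)/2)
        have hDr := Dp_pos hp r
        have hDn := Dp_pos hp n
        have hpT : (0:ℝ) < p ^ Nat.choose (r+1) 2 := by positivity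
        have hOp' : (∏ i ∈ Finset.Icc 1 ((n - r + 1) / 2), (1 - 1 / p ^ (2 * i - 1)))
            = Op p ((n - r + 1)/2) := rfl
        have hEp' : (∏ j ∈ Finset.Icc 1 ((n - r) / 2), (1 - 1 / p ^ (2 * j)))
            = Ep p ((n - r)/2) := rfl
        rw [hOp', hEp', qp]
        have key : (∏ j ∈ Finset.Icc (n - r + 1) n, (1 - 1 / p ^ j))
            * (Op p ((n - r + 1)/2) * Ep p ((n - r)/2))
            = Dp p r * ∏ j ∈ Finset.Icc (r + 1) n, (1 - 1 / p ^ j) := by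
          rw [hOE]
          rw [mul_comm] at hD1
          rw [hD1, hD2]
        have hL : ((∏ j ∈ Finset.Icc (n - r + 1) n, (1 - 1 / p ^ j)) * Op p ((n - r + 1)/2))
            * (1/p^(Nat.choose (r+1) 2) * (Dp p r)⁻¹)
            = ((∏ j ∈ Finset.Icc (n - r + 1) n, (1 - 1 / p ^ j)) * Op p ((n - r + 1)/2))
              / (p^(Nat.choose (r+1) 2) * Dp p r) := by
          rw [div_eq_mul_inv _ (p^(Nat.choose (r+1) 2) * Dp p r), mul_inv,
            one_div (p^(Nat.choose (r+1) 2))]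
        rw [hL, div_eq_div_iff (by positivity) (by positivity)]
        linear_combination (p ^ Nat.choose (r+1) 2) * key


/-- Corollary: number of parts under `P^{Sym}_n`.
The probability that a partition drawn from `P^{Sym}_n` has exactly `r ≤ n` parts is
`∏_{j=r+1}^n (1-1/p^j) / (p^{C(r+1,2)} ∏_{j=1}^{⌊(n-r)/2⌋} (1-1/p^{2j}))`. -/
theorem PSym_numParts (p : ℝ) (hp : 1 < p) (n : ℕ) (hn : 0 < n)
    (r : ℕ) (hr : r ≤ n) :
    ∑' l : {l : Ptn // l.numParts = r}, PSym p n l.1 =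
      (∏ j ∈ Finset.Icc (r + 1) n, (1 - 1 / p ^ j)) /
        (p ^ Nat.choose (r + 1) 2 *
          ∏ j ∈ Finset.Icc 1 ((n - r) / 2), (1 - 1 / p ^ (2 * j))) := by
  exact PSym_numParts_aux p hp n hn r hr
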